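/- Let P be a Poisson superalgebra and J = Kan(P) = P ⊕ P̄ its Kantor double. The map D: J → J defined by D(a) = 0 for a ∈ P and D(ā) = (-1)^{|a|} a for ā ∈ P̄ is an odd superderivation of the Jordan superalgebra J satisfying D² = 0. -/

import Mathlib

noncomputable section

/-- The sign `(-1)^i` for `i : ZMod 2`. -/
def sgn (K : Type) [Field K] (i : ZMod 2) : K := if i = 0 then 1 else -1

variable (K : Type) [Field K]

variable {V : Type} [AddCommGroup V] [Module K V]

/-- The linear span of all products `μ a b` with `a ∈ S`, `b ∈ T`. -/
def mulSpan (μ : V →ₗ[K] V →ₗ[K] V) (S T : Submodule K V) : Submodule K V :=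
  Submodule.span K {w | ∃ a ∈ S, ∃ b ∈ T, w = μ a b}

/-- A two-sided ideal of a (nonassociative) algebra with product `μ`. -/
def IsIdeal (μ : V →ₗ[K] V →ₗ[K] V) (I : Submodule K V) : Prop :=
  ∀ a : V, ∀ b ∈ I, μ a b ∈ I ∧ μ b a ∈ I

/-- The product respects the `ZMod 2`-grading. -/
def GradedMul (g : ZMod 2 → Submodule K V) (μ : V →ₗ[K] V →ₗ[K] V) : Prop :=
  ∀ i j : ZMod 2, ∀ a ∈ g i, ∀ b ∈ g j, μ a b ∈ g (i + j)

/-- Supercommutativity: `a b = (-1)^{|a||b|} b a` on homogeneous elements. -/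
def SuperComm (g : ZMod 2 → Submodule K V) (μ : V →ₗ[K] V →ₗ[K] V) : Prop :=
  ∀ i j : ZMod 2, ∀ a ∈ g i, ∀ b ∈ g j, μ a b = sgn K (i * j) • μ b a

/-- The linearized super Jordan identity on homogeneous elements. -/
def SuperJordan (g : ZMod 2 → Submodule K V) (μ : V →ₗ[K] V →ₗ[K] V) : Prop :=
  ∀ ia ib ic id : ZMod 2, ∀ a ∈ g ia, ∀ b ∈ g ib, ∀ c ∈ g ic, ∀ d ∈ g id,
    μ (μ a b) (μ c d) + sgn K (ib * ic) • μ (μ a c) (μ b d)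
        + sgn K ((ib + ic) * id) • μ (μ a d) (μ b c)
      = μ (μ (μ a b) c) d + sgn K (ib * (ic + id) + ic * id) • μ (μ (μ a d) c) b
        + sgn K (ia * (ib + ic + id) + ic * id) • μ (μ (μ b d) c) a

/-- A `ZMod 2`-graded algebra which is a Jordan superalgebra. -/
structure IsJordanSuper (g : ZMod 2 → Submodule K V) (μ : V →ₗ[K] V →ₗ[K] V) : Prop where
  internal : DirectSum.IsInternal g
  graded : GradedMul K g μ
  comm : SuperComm K g μ
  jordan : SuperJordan K g μ

/-- A `ZMod 2`-graded algebra which is a Lie superalgebra. -/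
structure IsLieSuper (g : ZMod 2 → Submodule K V) (br : V →ₗ[K] V →ₗ[K] V) : Prop where
  internal : DirectSum.IsInternal g
  graded : GradedMul K g br
  anti : ∀ i j : ZMod 2, ∀ x ∈ g i, ∀ y ∈ g j, br x y = -(sgn K (i * j)) • br y x
  jacobi : ∀ i j k : ZMod 2, ∀ x ∈ g i, ∀ y ∈ g j, ∀ z ∈ g k,
    br x (br y z) = br (br x y) z + sgn K (i * j) • br y (br x z)

/-- A Poisson superalgebra structure: a supercommutative associative unital product `m`
and a super Lie bracket `p` related by the super Leibniz rule. -/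
structure IsPoissonSuper (g : ZMod 2 → Submodule K V)
    (m p : V →ₗ[K] V →ₗ[K] V) (e : V) : Prop where
  internal : DirectSum.IsInternal g
  m_graded : GradedMul K g m
  assoc : ∀ a b c : V, m (m a b) c = m a (m b c)
  e_mem : e ∈ g 0
  one_mul : ∀ a : V, m e a = a
  mul_one : ∀ a : V, m a e = a
  comm : SuperComm K g m
  p_graded : GradedMul K g p
  anti : ∀ i j : ZMod 2, ∀ x ∈ g i, ∀ y ∈ g j, p x y = -(sgn K (i * j)) • p y x
  jacobi : ∀ i j k : ZMod 2, ∀ x ∈ g i, ∀ y ∈ g j, ∀ z ∈ g k,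
    p x (p y z) = p (p x y) z + sgn K (i * j) • p y (p x z)
  leibniz : ∀ j k : ZMod 2, ∀ a : V, ∀ b ∈ g j, ∀ c ∈ g k,
    p (m a b) c = m a (p b c) + sgn K (j * k) • m (p a c) b

/-- The `ZMod 2`-grading of the Kantor double `A ⊕ Ā`: the degree-`i` part is
`A_i ⊕ (Ā)_i` where `(Ā)_i = A_{i+1}` (i.e. `|ā| = 1 - |a|`). -/
def kanGrading (g : ZMod 2 → Submodule K V) : ZMod 2 → Submodule K (V × V) :=
  fun i => (g i).prod (g (i + 1))

/-- The defining multiplication rules of the Kantor double `Kan(A) = A ⊕ Ā` of a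
Poisson superalgebra `(A, m, p)`: `a•b = ab`, `a•b̄ = (ab)‾`, `ā•b = (-1)^{|b|}(ab)‾`,
`ā•b̄ = (-1)^{|b|}{a,b}`; an element `(a, b) : V × V` represents `a + b̄`. -/
structure KantorRules (g : ZMod 2 → Submodule K V) (m p : V →ₗ[K] V →ₗ[K] V)
    (μ : V × V →ₗ[K] V × V →ₗ[K] V × V) : Prop where
  plain_plain : ∀ a b : V, μ (a, 0) (b, 0) = (m a b, 0)
  plain_bar : ∀ a b : V, μ (a, 0) (0, b) = (0, m a b)
  bar_plain : ∀ a : V, ∀ j : ZMod 2, ∀ b ∈ g j, μ (0, a) (b, 0) = (0, sgn K j • m a b)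
  bar_bar : ∀ a : V, ∀ j : ZMod 2, ∀ b ∈ g j, μ (0, a) (0, b) = (sgn K j • p a b, 0)

/-- The unit `1` of the Jordan double `Jor(L) = ⟨1⟩ ⊕ L ⊕ ⟨1̄⟩ ⊕ L̄`; an element
`((α, x), (β, y))` of the carrier `(K × V) × (K × V)` represents `α1 + x + β1̄ + ȳ`. -/
def jOne (V : Type) [AddCommGroup V] [Module K V] : (K × V) × (K × V) := ((1, 0), (0, 0))

/-- The odd element `1̄` of the Jordan double `Jor(L)`. -/
def jBarOne (V : Type) [AddCommGroup V] [Module K V] : (K × V) × (K × V) := ((0, 0), (1, 0))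

/-- The embedding `L → Jor(L)`, `x ↦ x`. -/
def inclL (V : Type) [AddCommGroup V] [Module K V] : V →ₗ[K] (K × V) × (K × V) :=
  (LinearMap.inl K (K × V) (K × V)).comp (LinearMap.inr K K V)

/-- The embedding `L → Jor(L)`, `x ↦ x̄`. -/
def inclLBar (V : Type) [AddCommGroup V] [Module K V] : V →ₗ[K] (K × V) × (K × V) :=
  (LinearMap.inr K (K × V) (K × V)).comp (LinearMap.inr K K V)

/-- The `ZMod 2`-grading of `Jor(L)`: even part `⟨1⟩ ⊕ L₀ ⊕ L̄₁`, odd part `L₁ ⊕ ⟨1̄⟩ ⊕ L̄₀`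
(recall `|x̄| = 1 - |x|` and `1̄` is odd). -/
def jorGrading (g : ZMod 2 → Submodule K V) : ZMod 2 → Submodule K ((K × V) × (K × V)) :=
  fun i =>
    ((if i = 0 then (⊤ : Submodule K K) else ⊥).prod (g i)).prod
      ((if i = 0 then (⊥ : Submodule K K) else ⊤).prod (g (i + 1)))

/-- The defining multiplication rules of the Jordan double `Jor(L)` of a Lie
superalgebra `(L, [,])`: `1` is the unit, `x̄ • ȳ = [x,y]`, `x • 1̄ = x̄`,
`1̄ • x = (-1)^{|x|} x̄`, and all other products of `1, L, 1̄, L̄` vanish. -/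
structure JorRules (g : ZMod 2 → Submodule K V) (br : V →ₗ[K] V →ₗ[K] V)
    (μ : (K × V) × (K × V) →ₗ[K] (K × V) × (K × V) →ₗ[K] (K × V) × (K × V)) : Prop where
  one_mul : ∀ w, μ (jOne K V) w = w
  mul_one : ∀ w, μ w (jOne K V) = w
  l_l : ∀ x y : V, μ (inclL K V x) (inclL K V y) = 0
  l_lbar : ∀ x y : V, μ (inclL K V x) (inclLBar K V y) = 0
  lbar_l : ∀ x y : V, μ (inclLBar K V x) (inclL K V y) = 0
  lbar_lbar : ∀ x y : V, μ (inclLBar K V x) (inclLBar K V y) = inclL K V (br x y)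
  l_obar : ∀ x : V, μ (inclL K V x) (jBarOne K V) = inclLBar K V x
  obar_l : ∀ i : ZMod 2, ∀ x ∈ g i,
    μ (jBarOne K V) (inclL K V x) = sgn K i • inclLBar K V x
  obar_obar : μ (jBarOne K V) (jBarOne K V) = 0
  obar_lbar : ∀ x : V, μ (jBarOne K V) (inclLBar K V x) = 0
  lbar_obar : ∀ x : V, μ (inclLBar K V x) (jBarOne K V) = 0

/-- An algebra `(V, μ)` is just infinite if it is infinite-dimensional and every
nonzero ideal has finite codimension. -/
def JustInfinite (μ : V →ₗ[K] V →ₗ[K] V) : Prop :=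
  ¬ FiniteDimensional K V ∧
    ∀ I : Submodule K V, IsIdeal K μ I → I ≠ ⊥ → FiniteDimensional K (V ⧸ I)

end

noncomputable section

variable (K : Type) [Field K] {V : Type} [AddCommGroup V] [Module K V]

lemma kan_sup_top (g : ZMod 2 → Submodule K V) (hint : DirectSum.IsInternal g) : g 0 ⊔ g 1 = ⊤ := by
  rw [eq_top_iff, ← hint.submodule_iSup_eq_top]
  exact iSup_le fun i => by fin_cases i <;> [exact le_sup_left; exact le_sup_right]

lemma sgn_one' : sgn K 1 = -1 := rfl
lemma sgn_add' (i j : ZMod 2) : sgn K (i + j) = sgn K i * sgn K j := by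
  have h0 : sgn K 0 = 1 := rfl
  have h1 : sgn K 1 = -1 := rfl
  fin_cases i <;> fin_cases j
  · show sgn K 0 = sgn K 0 * sgn K 0; rw [h0, one_mul]
  · show sgn K 1 = sgn K 0 * sgn K 1; rw [h0, one_mul]
  · show sgn K 1 = sgn K 1 * sgn K 0; rw [h0, mul_one]
  · show sgn K 0 = sgn K 1 * sgn K 1; rw [h0, h1, neg_mul_neg, one_mul]
lemma sgn_sq' (i : ZMod 2) : sgn K i * sgn K i = 1 := by
  have h0 : sgn K 0 = 1 := rfl
  have h1 : sgn K 1 = -1 := rfl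
  fin_cases i
  · show sgn K 0 * sgn K 0 = 1; rw [h0, one_mul]
  · show sgn K 1 * sgn K 1 = 1; rw [h1, neg_mul_neg, one_mul]

lemma kantor_core
    (g : ZMod 2 → Submodule K V) (m p : V →ₗ[K] V →ₗ[K] V)
    (hm : GradedMul K g m)
    (μ : V × V →ₗ[K] V × V →ₗ[K] V × V) (hμ : KantorRules K g m p μ)
    (D : V × V →ₗ[K] V × V)
    (hD_plain : ∀ a : V, D (a, 0) = 0)
    (hD_bar : ∀ i : ZMod 2, ∀ a ∈ g i, D (0, a) = (sgn K i • a, 0))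
    (i j : ZMod 2) (a : V) (ha : a ∈ g i) (b : V) (hb : b ∈ g (i+1))
    (c : V) (hc : c ∈ g j) (d : V) (hd : d ∈ g (j+1)) :
    D (μ (a,b) (c,d)) = μ (D (a,b)) (c,d) + sgn K i • μ (a,b) (D (c,d)) := by
  have hab : ((a,b) : V×V) = (a,0) + (0,b) := by simp
  have hcd : ((c,d) : V×V) = (c,0) + (0,d) := by simp
  have hDu : D (a,b) = sgn K (i+1) • ((b,0) : V×V) := by
    rw [hab, map_add, hD_plain, hD_bar (i+1) b hb, zero_add]
    simp [Prod.ext_iff]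
  have hDv : D (c,d) = sgn K (j+1) • ((d,0) : V×V) := by
    rw [hcd, map_add, hD_plain, hD_bar (j+1) d hd, zero_add]
    simp [Prod.ext_iff]
  have hmad : m a d ∈ g (i + (j+1)) := hm i (j+1) a ha d hd
  have hmbc : m b c ∈ g (i + (j+1)) := by
    have := hm (i+1) j b hb c hc
    rwa [show i+1+j = i+(j+1) by ring] at this
  have hDsmul : ∀ (t : K) (x : V), D (0, t • x) = t • D (0, x) := by
    intro t x
    rw [show ((0:V), t • x) = t • (((0:V), x) : V×V) by simp, map_smul]
  have hLHS : D (μ (a,b) (c,d))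
      = (sgn K (i+(j+1)) • m a d, 0) + sgn K j • (sgn K (i+(j+1)) • m b c, 0) := by
    rw [hab, hcd]
    simp only [map_add, LinearMap.add_apply]
    rw [hμ.plain_plain, hμ.plain_bar, hμ.bar_plain b j c hc, hμ.bar_bar b (j+1) d hd,
      hD_plain, hD_plain, hDsmul, hD_bar (i+(j+1)) _ hmad, hD_bar (i+(j+1)) _ hmbc]
    abel
  have hR1 : μ (D (a,b)) (c,d) = sgn K (i+1) • ((m b c, 0) + ((0:V), m b d)) := by
    rw [hDu, map_smul, LinearMap.smul_apply, hcd, map_add,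
      hμ.plain_plain, hμ.plain_bar]
  have hR2 : μ (a,b) (D (c,d)) = sgn K (j+1) • ((m a d, 0) + ((0:V), sgn K (j+1) • m b d)) := by
    rw [hDv, map_smul, hab]
    simp only [map_add, LinearMap.add_apply]
    rw [hμ.plain_plain, hμ.bar_plain b (j+1) d hd]
  rw [hLHS, hR1, hR2, Prod.ext_iff]
  constructor <;>
    (simp only [sgn_add', sgn_one', smul_add, Prod.smul_mk, Prod.mk_add_mk, Prod.fst_add,
        Prod.snd_add, smul_zero, add_zero, zero_add, smul_smul];
     try (match_scalars <;> (first | ring1 | linear_combination (-(sgn K i)) * sgn_sq' K j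
                                   | linear_combination (sgn K i) * sgn_sq' K j)))

end

/-- Let `P` be a Poisson superalgebra and `J = Kan(P) = P ⊕ P̄`
its Kantor double.  The map `D : J → J`, `D(a) = 0` for `a ∈ P` and
`D(ā) = (-1)^{|a|} a` for `ā ∈ P̄`, is an odd superderivation of the Jordan
superalgebra `J` with `D² = 0`. -/
theorem kantor_double_superderivation
    (K : Type) [Field K] (hchar : (2 : K) ≠ 0)
    {V : Type} [AddCommGroup V] [Module K V]
    (g : ZMod 2 → Submodule K V) (m p : V →ₗ[K] V →ₗ[K] V) (e : V)
    (hA : IsPoissonSuper K g m p e)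
    (μ : V × V →ₗ[K] V × V →ₗ[K] V × V)
    (hμ : KantorRules K g m p μ)
    (D : V × V →ₗ[K] V × V)
    (hD_plain : ∀ a : V, D (a, 0) = 0)
    (hD_bar : ∀ i : ZMod 2, ∀ a ∈ g i, D (0, a) = (sgn K i • a, 0)) :
    (∀ i : ZMod 2, ∀ u ∈ kanGrading K g i, D u ∈ kanGrading K g (i + 1)) ∧
    (∀ i : ZMod 2, ∀ u ∈ kanGrading K g i, ∀ v : V × V,
      D (μ u v) = μ (D u) v + sgn K i • μ u (D v)) ∧
    (∀ w : V × V, D (D w) = 0) := by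
  have hdecomp : ∀ x : V, ∃ x0 ∈ g 0, ∃ x1 ∈ g 1, x = x0 + x1 := by
    intro x
    have hx : x ∈ g 0 ⊔ g 1 := (kan_sup_top K g hA.internal) ▸ Submodule.mem_top
    rcases Submodule.mem_sup.mp hx with ⟨x0, h0, x1, h1, h⟩
    exact ⟨x0, h0, x1, h1, h.symm⟩
  refine ⟨?_, ?_, ?_⟩
  · intro i u hu
    simp only [kanGrading, Submodule.mem_prod] at hu ⊢
    obtain ⟨h1, h2⟩ := hu
    have hu' : u = (u.1, 0) + (0, u.2) := by simp
    have hDu : D u = (sgn K (i+1) • u.2, 0) := by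
      conv_lhs => rw [hu']
      rw [map_add, hD_plain, hD_bar (i+1) u.2 h2, zero_add]
    rw [hDu]
    exact ⟨Submodule.smul_mem _ _ h2, (g (i+1+1)).zero_mem⟩
  · intro i u hu v
    obtain ⟨a, b⟩ := u
    simp only [kanGrading, Submodule.mem_prod] at hu
    obtain ⟨ha, hb⟩ := hu
    obtain ⟨c0, hc0, c1, hc1, hc⟩ := hdecomp v.1
    obtain ⟨d0, hd0, d1, hd1, hd⟩ := hdecomp v.2
    have hv : v = ((c0, d1) : V × V) + (c1, d0) := by
      rw [Prod.ext_iff]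
      exact ⟨by simpa using hc, by simpa [add_comm] using hd⟩
    have hd1' : d1 ∈ g (0 + 1) := by rwa [show ((0 : ZMod 2) + 1) = 1 from rfl]
    have hd0' : d0 ∈ g (1 + 1) := by rwa [show ((1 : ZMod 2) + 1) = 0 from rfl]
    have e1 := kantor_core K g m p hA.m_graded μ hμ D hD_plain hD_bar i 0 a ha b hb c0 hc0 d1 hd1'
    have e2 := kantor_core K g m p hA.m_graded μ hμ D hD_plain hD_bar i 1 a ha b hb c1 hc1 d0 hd0'
    rw [hv]
    simp only [map_add, LinearMap.add_apply, smul_add]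
    rw [e1, e2]
    abel
  · intro w
    obtain ⟨x, y⟩ := w
    obtain ⟨y0, hy0, y1, hy1, hy⟩ := hdecomp y
    have hw : ((x, y) : V × V) = (x, 0) + (0, y0) + (0, y1) := by
      rw [Prod.ext_iff]
      constructor <;> simp [hy]
    rw [hw]
    simp only [map_add]
    rw [hD_plain, hD_bar 0 y0 hy0, hD_bar 1 y1 hy1]
    simp [hD_plain]
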